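/- arXiv:2211.16729 — 2 statements merged into one kernel-verified Lean document; each statement's English description precedes it below -/
import Mathlib

section
/- For all reals a, b with 0 < a < b ≤ 1 there exist δ ∈ (0,1) and an integer M such that for all integers m ≥ M, 0 < J_m(m a) ≤ (1 − δ)^m · J_m(m b); in particular J_m(m a)/J_m(m b) → 0 exponentially fast as m → ∞. -/
open MeasureTheory Filter Set Topology
set_option maxHeartbeats 1000000

/-- The Bessel function of the first kind of order `ν`:
`J_ν(x) = ∑ₖ (-1)^k / (k! Γ(ν+k+1)) (x/2)^(2k+ν)`. -/
noncomputable def besselJ (ν : ℝ) (x : ℝ) : ℝ :=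
  ∑' k : ℕ, ((-1 : ℝ) ^ k / ((k.factorial : ℝ) * Real.Gamma (ν + (k : ℝ) + 1))) *
    (x / 2) ^ (2 * (k : ℝ) + ν)

/-- The derivative `J_ν'` of the Bessel function. -/
noncomputable def besselJDeriv (ν : ℝ) (x : ℝ) : ℝ := deriv (besselJ ν) x

/-- `besselJZero ν s` is the `s`-th positive zero of `J_ν` (for `s ≥ 1`),
listed in increasing order. -/
noncomputable def besselJZero (ν : ℝ) : ℕ → ℝ
  | 0 => 0
  | s + 1 => sInf {x : ℝ | besselJZero ν s < x ∧ besselJ ν x = 0}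

/-- `besselJPrimeZero ν s` is the `s`-th positive zero of `J_ν'` (for `s ≥ 1`),
listed in increasing order. -/
noncomputable def besselJPrimeZero (ν : ℝ) : ℕ → ℝ
  | 0 => 0
  | s + 1 => sInf {x : ℝ | besselJPrimeZero ν s < x ∧ besselJDeriv ν x = 0}


section BesselAux

noncomputable def cc (m k : ℕ) : ℝ :=
  (-1)^k / (k.factorial * (m+k).factorial * 2^(2*k+m))

lemma cc_denom_pos (m k : ℕ) :
    (0:ℝ) < (k.factorial * (m+k).factorial * 2^(2*k+m) : ℝ) := by positivity

lemma cc_abs (m k : ℕ) : |cc m k| = 1 / (k.factorial * (m+k).factorial * 2^(2*k+m)) := by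
  unfold cc
  rw [abs_div, abs_pow, abs_neg, abs_one, one_pow, abs_of_pos (cc_denom_pos m k)]

lemma cc_abs_le (m k : ℕ) : |cc m k| ≤ 1 / k.factorial := by
  rw [cc_abs]
  apply div_le_div_of_nonneg_left (by norm_num) (by positivity)
  have h1 : (1:ℝ) ≤ ((m+k).factorial : ℝ) := by exact_mod_cast Nat.one_le_iff_ne_zero.2 (m+k).factorial_ne_zero
  have h2 : (1:ℝ) ≤ (2:ℝ)^(2*k+m) := one_le_pow₀ (by norm_num)
  have h3 : (0:ℝ) < (k.factorial:ℝ) := by positivity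
  nlinarith [mul_le_mul_of_nonneg_left (mul_le_mul h1 h2 (by norm_num) (by linarith)) h3.le]

lemma cc_zero_pos (m : ℕ) : 0 < cc m 0 := by
  unfold cc
  positivity

lemma summable_master (y : ℝ) : Summable (fun k : ℕ => (2*(k:ℝ)+2) * y^k / k.factorial) := by
  have h := (Real.summable_pow_div_factorial (2*|y|)).mul_left 4
  apply Summable.of_norm
  apply Summable.of_nonneg_of_le (fun k => norm_nonneg _) _ h
  intro k
  have hk : (2*(k:ℝ)+2) ≤ 4 * 2^k := by
    induction k with
    | zero => norm_num
    | succ n ih => push_cast; push_cast at ih; rw [pow_succ]; nlinarith [pow_pos (show (0:ℝ)<2 by norm_num) n]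
  have h2 : ‖(2*(k:ℝ)+2) * y^k / k.factorial‖ = (2*(k:ℝ)+2) * |y|^k / k.factorial := by
    rw [norm_div, norm_mul, Real.norm_eq_abs, Real.norm_eq_abs, Real.norm_eq_abs, abs_pow,
      abs_of_pos (by positivity : (0:ℝ) < 2*(k:ℝ)+2), Nat.abs_cast]
  rw [h2, mul_pow]
  have h4 : (0:ℝ) < (k.factorial:ℝ) := by positivity
  rw [div_le_iff₀ h4]
  have h5 : 4 * (2 ^ k * |y| ^ k / ↑k.factorial) * ↑k.factorial = 4 * (2 ^ k * |y| ^ k) := by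
    field_simp
  rw [h5]
  have := pow_nonneg (abs_nonneg y) k
  nlinarith

noncomputable def EE (m : ℕ) (x : ℝ) : ℝ := ∑' k : ℕ, cc m k * x^(2*k)

lemma summable_E (m : ℕ) (x : ℝ) : Summable (fun k : ℕ => cc m k * x^(2*k)) := by
  apply Summable.of_norm
  apply Summable.of_nonneg_of_le (fun k => norm_nonneg _) _ (summable_master (x^2))
  intro k
  rw [Real.norm_eq_abs, abs_mul, abs_pow, pow_mul, sq_abs]
  calc |cc m k| * (x^2)^k ≤ (1/k.factorial) * (x^2)^k := by
        apply mul_le_mul_of_nonneg_right (cc_abs_le m k) (by positivity)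
    _ ≤ (2*(k:ℝ)+2) * (x^2)^k / k.factorial := by
        rw [div_mul_eq_mul_div, one_mul, div_le_div_iff₀ (by positivity) (by positivity)]
        have h1 : (0:ℝ) < (k.factorial:ℝ) := by positivity
        have h2 : (0:ℝ) ≤ (x^2)^k := by positivity
        nlinarith [mul_nonneg (mul_nonneg h2 h1.le) (show (0:ℝ) ≤ 2*(k:ℝ)+1 by positivity)]


lemma cc_succ (m k : ℕ) : cc m (k+1) * (2*((k:ℝ)+1)) = -(cc (m+1) k) := by
  unfold cc
  have h1 : m + (k+1) = (m+1) + k := by omega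
  have h2 : 2*(k+1)+m = (2*k+(m+1)) + 1 := by omega
  rw [h1, h2, pow_succ, pow_succ, Nat.factorial_succ]
  have hk : ((k.factorial : ℝ)) ≠ 0 := by positivity
  have hf : (((m+1+k).factorial : ℝ)) ≠ 0 := by positivity
  have hp : ((2:ℝ)^(2*k+(m+1))) ≠ 0 := by positivity
  push_cast
  field_simp

lemma deriv_term_bound (m k : ℕ) {y r : ℝ} (hr : 1 ≤ r) (hy : |y| ≤ r) :
    ‖cc m k * (2*(k:ℝ) * y^(2*k-1))‖ ≤ (2*(k:ℝ)+2) * (r^2)^k / k.factorial := by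
  rw [Real.norm_eq_abs, abs_mul, abs_mul, abs_pow]
  have h0 : (0:ℝ) ≤ 2*(k:ℝ) := by positivity
  have hy' : |y|^(2*k-1) ≤ (r^2)^k := by
    rw [← pow_mul]
    calc |y|^(2*k-1) ≤ r^(2*k-1) := pow_le_pow_left₀ (abs_nonneg y) hy _
      _ ≤ r^(2*k) := pow_le_pow_right₀ hr (Nat.sub_le _ _)
  have habs2 : |2*(k:ℝ)| = 2*(k:ℝ) := abs_of_nonneg h0
  rw [habs2]
  calc |cc m k| * (2*(k:ℝ) * |y|^(2*k-1)) ≤ (1/k.factorial) * (2*(k:ℝ) * (r^2)^k) := by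
        apply mul_le_mul (cc_abs_le m k) (mul_le_mul_of_nonneg_left hy' h0)
          (by positivity) (by positivity)
    _ = 2*(k:ℝ) * (r^2)^k / k.factorial := by ring
    _ ≤ (2*(k:ℝ)+2) * (r^2)^k / k.factorial := by gcongr; linarith

lemma summable_deriv_bound (m : ℕ) (x : ℝ) :
    Summable (fun k : ℕ => cc m k * (2*(k:ℝ) * x^(2*k-1))) := by
  apply Summable.of_norm
  apply Summable.of_nonneg_of_le (fun k => norm_nonneg _) _ (summable_master ((|x|+1)^2))
  intro k
  exact deriv_term_bound m k (by linarith [abs_nonneg x]) (by linarith)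

lemma hasDerivAt_E (m : ℕ) (x : ℝ) : HasDerivAt (EE m) (-(x * EE (m+1) x)) x := by
  set R : ℝ := |x| + 1 with hR
  have hR1 : 1 ≤ R := by rw [hR]; linarith [abs_nonneg x]
  have hxR : x ∈ Metric.ball (0:ℝ) R := by
    simp only [Metric.mem_ball, Real.dist_eq, sub_zero, hR]
    linarith
  have key : HasDerivAt (fun z => ∑' k : ℕ, cc m k * z^(2*k))
      (∑' k : ℕ, cc m k * (2*(k:ℝ) * x^(2*k-1))) x := by
    apply hasDerivAt_tsum_of_isPreconnected
      (summable_master (R^2)) Metric.isOpen_ball ((convex_ball (0:ℝ) R).isPreconnected)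
      (g := fun k z => cc m k * z^(2*k))
      (g' := fun k z => cc m k * (2*(k:ℝ) * z^(2*k-1)))
      _ _ (Metric.mem_ball_self (by linarith) : (0:ℝ) ∈ Metric.ball 0 R) _ hxR
    · intro k y hy
      have := (hasDerivAt_pow (2*k) y).const_mul (cc m k)
      exact this.congr_deriv (by push_cast; ring)
    · intro k y hy
      simp only [Metric.mem_ball, Real.dist_eq, sub_zero] at hy
      exact deriv_term_bound m k hR1 hy.le
    · exact summable_E m 0
  have heq : (∑' k : ℕ, cc m k * (2*(k:ℝ) * x^(2*k-1))) = -(x * EE (m+1) x) := by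
    rw [Summable.tsum_eq_zero_add (summable_deriv_bound m x)]
    simp only [Nat.cast_zero, mul_zero, zero_mul, Nat.mul_zero, zero_add]
    have : ∀ k : ℕ, cc m (k+1) * (2*((k+1:ℕ):ℝ) * x^(2*(k+1)-1))
        = -(x * (cc (m+1) k * x^(2*k))) := by
      intro k
      have h1 : 2*(k+1)-1 = 2*k+1 := by omega
      rw [h1, ← mul_assoc]
      push_cast
      rw [cc_succ m k]
      ring
    rw [tsum_congr this, tsum_neg, tsum_mul_left]
    rfl
  rw [heq] at key
  exact key

lemma cc_rec (m k : ℕ) :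
    cc m (k+1) = (2*(m:ℝ)+2) * cc (m+1) (k+1) - cc (m+2) k := by
  unfold cc
  have e1 : m + (k+1) = (m+k) + 1 := by omega
  have e2 : (m+1) + (k+1) = ((m+k)+1) + 1 := by omega
  have e3 : (m+2) + k = ((m+k)+1) + 1 := by omega
  have e4 : 2*(k+1)+m = (2*k+m) + 2 := by omega
  have e5 : 2*(k+1)+(m+1) = (2*k+m) + 3 := by omega
  have e6 : 2*k+(m+2) = (2*k+m) + 2 := by omega
  rw [e1, e2, e3, e4, e5, e6, Nat.factorial_succ ((m+k)+1), Nat.factorial_succ (m+k),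
    Nat.factorial_succ k, pow_succ (-1:ℝ) k]
  have h1 : ((k.factorial : ℝ)) ≠ 0 := by positivity
  have h2 : (((m+k).factorial : ℝ)) ≠ 0 := by positivity
  have h3 : ((2:ℝ)^(2*k+m)) ≠ 0 := by positivity
  push_cast
  rw [pow_add, pow_add]
  field_simp
  ring

lemma E_rec (m : ℕ) (x : ℝ) :
    EE m x = (2*(m:ℝ)+2) * EE (m+1) x - x^2 * EE (m+2) x := by
  have s1 := summable_E m x
  have s2 := summable_E (m+1) x
  have s3 := summable_E (m+2) x
  have s2' : Summable (fun k : ℕ => cc (m+1) (k+1) * x^(2*(k+1))) :=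
    ((summable_nat_add_iff 1).2 s2)
  have s3' : Summable (fun k : ℕ => x^2 * (cc (m+2) k * x^(2*k))) := s3.mul_left _
  have h3 : x^2 * EE (m+2) x = ∑' k : ℕ, cc (m+2) k * x^(2*(k+1)) := by
    rw [EE, ← tsum_mul_left]
    apply tsum_congr
    intro k
    ring
  have h2 : (2*(m:ℝ)+2) * EE (m+1) x
      = (2*(m:ℝ)+2) * cc (m+1) 0 + ∑' k : ℕ, (2*(m:ℝ)+2) * (cc (m+1) (k+1) * x^(2*(k+1))) := by
    rw [EE, Summable.tsum_eq_zero_add s2, mul_add, tsum_mul_left]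
    norm_num
  have h3' : x^2 * EE (m+2) x = ∑' k : ℕ, cc (m+2) k * x^(2*(k+1)) := h3
  rw [h2, h3', EE, Summable.tsum_eq_zero_add s1]
  have hsub : (∑' k : ℕ, (2*(m:ℝ)+2) * (cc (m+1) (k+1) * x^(2*(k+1))))
      - (∑' k : ℕ, cc (m+2) k * x^(2*(k+1)))
      = ∑' k : ℕ, cc m (k+1) * x^(2*(k+1)) := by
    rw [← Summable.tsum_sub (s2'.mul_left _) (by
      have : (fun k : ℕ => cc (m+2) k * x^(2*(k+1))) = fun k : ℕ => x^2 * (cc (m+2) k * x^(2*k)) := by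
        funext k; ring
      rw [this]; exact s3')]
    apply tsum_congr
    intro k
    rw [cc_rec m k]
    ring
  have hc0 : cc m 0 = (2*(m:ℝ)+2) * cc (m+1) 0 := by
    unfold cc
    have : m + 1 + 0 = (m + 0) + 1 := by omega
    rw [this, Nat.factorial_succ]
    have e : 2*0+(m+1) = (2*0+m)+1 := by omega
    rw [e, pow_succ]
    have h2' : (((m+0).factorial : ℝ)) ≠ 0 := by positivity
    have h3'' : ((2:ℝ)^(2*0+m)) ≠ 0 := by positivity
    push_cast
    field_simp
    ring
  rw [add_sub_assoc, hsub, hc0]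
  norm_num

noncomputable def JJ (m : ℕ) (x : ℝ) : ℝ := x^m * EE m x
noncomputable def DD (m : ℕ) (x : ℝ) : ℝ :=
  (m:ℝ) * x^(m-1) * EE m x - x^(m+1) * EE (m+1) x
noncomputable def D2 (m : ℕ) (x : ℝ) : ℝ :=
  (m:ℝ)*((m:ℝ)-1)*x^(m-2) * EE m x - (2*(m:ℝ)+1) * x^m * EE (m+1) x + x^(m+2) * EE (m+2) x

lemma pow_pred_mul (n : ℕ) (x : ℝ) : (n:ℝ) * x^(n-1) * x = (n:ℝ) * x^n := by
  cases n with
  | zero => simp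
  | succ k => rw [Nat.succ_sub_one]; push_cast; rw [mul_assoc, ← pow_succ]

lemma contE (m : ℕ) : Continuous (EE m) :=
  continuous_iff_continuousAt.2 fun x => (hasDerivAt_E m x).continuousAt

lemma hasDerivAt_J (m : ℕ) (x : ℝ) : HasDerivAt (JJ m) (DD m x) x := by
  have h := (hasDerivAt_pow m x).mul (hasDerivAt_E m x)
  have e : (↑m * x ^ (m - 1) * EE m x + x ^ m * -(x * EE (m + 1) x)) = DD m x := by
    unfold DD
    rw [pow_succ]
    ring
  rw [e] at h
  exact h

lemma hasDerivAt_D (m : ℕ) (hm : 1 ≤ m) (x : ℝ) : HasDerivAt (DD m) (D2 m x) x := by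
  have e1 : m-1-1 = m-2 := by omega
  have e2 : (((m-1:ℕ)):ℝ) = (m:ℝ)-1 := by
    push_cast [Nat.cast_sub hm]; ring
  have hp := (hasDerivAt_pow (m-1) x).const_mul (m:ℝ)
  simp only [e1, e2] at hp
  have h1 := hp.mul (hasDerivAt_E m x)
  have h2 := (hasDerivAt_pow (m+1) x).mul (hasDerivAt_E (m+1) x)
  have h := h1.sub h2
  have e : ((m:ℝ) * (((m:ℝ)-1) * x^(m-2)) * EE m x + (m:ℝ) * x^(m-1) * -(x * EE (m+1) x))
      - ((((m+1:ℕ)):ℝ) * x^(m+1-1) * EE (m+1) x + x^(m+1) * -(x * EE (m+2) x)) = D2 m x := by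
    unfold D2
    have e3 : m+1-1 = m := by omega
    rw [e3, pow_succ x (m+1)]
    push_cast
    linear_combination (-(EE (m+1) x)) * pow_pred_mul m x
  rw [e] at h
  have efun : (fun y => (m:ℝ) * y^(m-1) * EE m y - y^(m+1) * EE (m+1) y) = DD m := by
    funext y; rfl
  rw [← efun]
  exact h

lemma pow_pred2_mul (n : ℕ) (x : ℝ) :
    (n:ℝ) * ((n:ℝ)-1) * x^(n-2) * x^2 = (n:ℝ) * ((n:ℝ)-1) * x^n := by
  match n with
  | 0 => simp
  | 1 => norm_num
  | (k+2) =>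
    have : k+2-2 = k := by omega
    rw [this, pow_add]
    ring

lemma pow_pred_mul' (n : ℕ) (hn : 1 ≤ n) (x : ℝ) : x^n = x^(n-1) * x := by
  obtain ⟨k, rfl⟩ := Nat.exists_eq_add_of_le hn
  have : 1+k-1 = k := by omega
  rw [this, ← pow_succ]
  congr 1
  omega

lemma pow_pred_sq (n : ℕ) (hn : 1 ≤ n) (x : ℝ) : x^(n-1) * x^2 = x^(n+1) := by
  obtain ⟨k, rfl⟩ := Nat.exists_eq_add_of_le hn
  have : 1+k-1 = k := by omega
  rw [this, ← pow_add]
  congr 1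
  omega

lemma ode (m : ℕ) (x : ℝ) :
    x^2 * D2 m x = -(x * DD m x) - (x^2 - (m:ℝ)^2) * JJ m x := by
  unfold D2 DD JJ
  rw [E_rec m x]
  linear_combination ((2*(m:ℝ)+2) * EE (m+1) x - x^2 * EE (m+2) x) * pow_pred2_mul m x
    + ((2*(m:ℝ)+2) * EE (m+1) x - x^2 * EE (m+2) x) * pow_pred_mul m x

noncomputable def gg (m : ℕ) (x : ℝ) : ℝ := Real.sqrt ((m:ℝ)^2 - x^2) / x
noncomputable def AA (m : ℕ) (x : ℝ) : ℝ :=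
  EE m x / ((m:ℝ) + Real.sqrt ((m:ℝ)^2 - x^2)) - EE (m+1) x

lemma identity1 (m : ℕ) (hm : 1 ≤ m) {x : ℝ} (hx : 0 < x) (hxm : x ≤ m) :
    DD m x - gg m x * JJ m x = x^(m+1) * AA m x := by
  set s := Real.sqrt ((m:ℝ)^2 - x^2) with hs
  have hm2 : (0:ℝ) ≤ (m:ℝ)^2 - x^2 := by nlinarith [hx.le]
  have hs2 : s^2 = (m:ℝ)^2 - x^2 := Real.sq_sqrt hm2
  have hs0 : 0 ≤ s := Real.sqrt_nonneg _
  have hms : (0:ℝ) < (m:ℝ) + s := by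
    have : (1:ℝ) ≤ (m:ℝ) := by exact_mod_cast hm
    linarith
  unfold DD JJ gg AA
  rw [← hs]
  field_simp
  linear_combination (- x^m*EE m x) * hs2
    + ((-(m:ℝ)*s - (m:ℝ)^2)*EE m x) * (pow_pred_mul' m hm x)

lemma E_zero (m : ℕ) : EE m 0 = cc m 0 := by
  rw [EE, tsum_eq_single 0]
  · norm_num
  · intro k hk
    rw [zero_pow (by omega : 2*k ≠ 0), mul_zero]

lemma AA_zero_pos (m : ℕ) (hm : 1 ≤ m) : 0 < AA m 0 := by
  have hm0 : (0:ℝ) < m := by exact_mod_cast hm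
  have hf : (0:ℝ) < (m.factorial : ℝ) := by positivity
  have h2 : (0:ℝ) < (2:ℝ)^m := by positivity
  unfold AA
  rw [E_zero, E_zero]
  have hsq : Real.sqrt ((m:ℝ)^2 - 0^2) = m := by
    rw [← Real.sqrt_sq hm0.le]
    norm_num
  rw [hsq]
  have c1 : cc m 0 = 1/((m.factorial:ℝ) * 2^m) := by
    unfold cc; norm_num
  have c2 : cc (m+1) 0 = 1/(((m+1).factorial:ℝ) * 2^(m+1)) := by
    unfold cc; norm_num
  have e1 : ((m+1).factorial : ℝ) = ((m:ℝ)+1) * m.factorial := by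
    rw [Nat.factorial_succ]; push_cast; ring
  rw [c1, c2, e1, sub_pos, div_div, div_lt_div_iff₀ (by positivity) (by positivity)]
  rw [pow_succ]
  nlinarith [mul_pos hf h2]

lemma contA (m : ℕ) (hm : 1 ≤ m) : Continuous (AA m) := by
  have hm0 : (0:ℝ) < m := by exact_mod_cast hm
  apply Continuous.sub _ (contE (m+1))
  apply Continuous.div (contE m)
  · exact continuous_const.add (Real.continuous_sqrt.comp (by continuity))
  · intro x
    have := Real.sqrt_nonneg ((m:ℝ)^2 - x^2)
    positivity

lemma hasDerivAt_g (m : ℕ) {x : ℝ} (hx : 0 < x) (hxm : x < m) :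
    HasDerivAt (gg m) (-(m:ℝ)^2 / (Real.sqrt ((m:ℝ)^2 - x^2) * x^2)) x := by
  set s := Real.sqrt ((m:ℝ)^2 - x^2) with hsdef
  have hpos : (0:ℝ) < (m:ℝ)^2 - x^2 := by nlinarith
  have hs2 : s^2 = (m:ℝ)^2 - x^2 := Real.sq_sqrt hpos.le
  have hspos : 0 < s := Real.sqrt_pos.2 hpos
  have hinner : HasDerivAt (fun y : ℝ => (m:ℝ)^2 - y^2) (-(2*x)) x := by
    have := (hasDerivAt_pow 2 x).const_sub ((m:ℝ)^2)
    simpa using this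
  have hsq : HasDerivAt (fun y : ℝ => Real.sqrt ((m:ℝ)^2 - y^2)) (1/(2*s) * (-(2*x))) x :=
    (Real.hasDerivAt_sqrt hpos.ne').comp x hinner
  have hdiv := hsq.div (hasDerivAt_id x) hx.ne'
  rw [← hsdef] at hdiv
  have heq : (1/(2*s) * (-(2*x)) * id x - s * 1) / (id x)^2 = -(m:ℝ)^2 / (s * x^2) := by
    simp only [id]
    field_simp
    linear_combination (-1) * hs2
  rw [heq] at hdiv
  exact hdiv

lemma no_cross {h : ℝ → ℝ} {x₀ d : ℝ} (hx₀ : 0 < x₀) (hd : HasDerivAt h d x₀)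
    (hdpos : 0 < d) (h0 : h x₀ = 0)
    (hpos : ∀ y, 0 < y → y < x₀ → 0 < h y) : False := by
  have hslope := hasDerivAt_iff_tendsto_slope.1 hd
  have hslope' : Tendsto (slope h x₀) (𝓝[<] x₀) (𝓝 d) :=
    hslope.mono_left (nhdsWithin_mono _ (fun y hy => ne_of_lt hy))
  have hev1 : ∀ᶠ y in 𝓝[<] x₀, 0 < slope h x₀ y :=
    hslope'.eventually (eventually_gt_nhds hdpos)
  have hev2 : ∀ᶠ y in 𝓝[<] x₀, y ∈ Ioo (x₀/2) x₀ :=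
    Ioo_mem_nhdsLT_of_mem ⟨by linarith, le_refl _⟩
  obtain ⟨y, hy1, hy2⟩ := (hev1.and hev2).exists
  have hypos : 0 < h y := hpos y (by linarith [hy2.1]) hy2.2
  have : slope h x₀ y < 0 := by
    rw [slope_def_field]
    apply div_neg_of_pos_of_neg
    · rw [h0]; linarith
    · linarith [hy2.2]
  linarith

lemma pos_EA (m : ℕ) (hm : 1 ≤ m) : ∀ x : ℝ, 0 < x → x < m → 0 < EE m x ∧ 0 < AA m x := by
  have hm0 : (0:ℝ) < m := by exact_mod_cast hm
  by_contra hcon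
  push_neg at hcon
  obtain ⟨z, hz0, hzm, hzbad⟩ := hcon
  -- the bad set
  set T : Set ℝ := {x : ℝ | 0 < x ∧ x < m ∧ (EE m x ≤ 0 ∨ AA m x ≤ 0)} with hT
  have hzT : z ∈ T := by
    refine ⟨hz0, hzm, ?_⟩
    by_cases hE : 0 < EE m z
    · exact Or.inr (hzbad hE)
    · exact Or.inl (not_lt.1 hE)
  have hne : T.Nonempty := ⟨z, hzT⟩
  have hbdd : BddBelow T := ⟨0, fun t ht => (ht.1).le⟩
  -- positivity near zero
  have hO : IsOpen {x : ℝ | 0 < EE m x ∧ 0 < AA m x} := by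
    exact (isOpen_lt continuous_const (contE m)).inter (isOpen_lt continuous_const (contA m hm))
  have h0O : (0:ℝ) ∈ {x : ℝ | 0 < EE m x ∧ 0 < AA m x} := by
    constructor
    · rw [E_zero]; exact cc_zero_pos m
    · exact AA_zero_pos m hm
  obtain ⟨ε, hε, hball⟩ := Metric.isOpen_iff.1 hO 0 h0O
  set x₀ := sInf T with hx₀def
  have hεlb : ∀ t ∈ T, ε ≤ t := by
    intro t ht
    by_contra hlt
    push_neg at hlt
    have : t ∈ Metric.ball (0:ℝ) ε := by
      simp only [Metric.mem_ball, Real.dist_eq, sub_zero]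
      rw [abs_of_pos ht.1]; exact hlt
    have := hball this
    rcases ht.2.2 with h | h
    · linarith [this.1]
    · linarith [this.2]
  have hx₀ε : ε ≤ x₀ := le_csInf hne hεlb
  have hx₀pos : 0 < x₀ := lt_of_lt_of_le hε hx₀ε
  have hx₀m : x₀ < m := lt_of_le_of_lt (csInf_le hbdd hzT) hzm
  -- good below x₀
  have hgood : ∀ y, 0 < y → y < x₀ → 0 < EE m y ∧ 0 < AA m y := by
    intro y hy0 hyx₀
    by_contra hbad
    have hyT : y ∈ T := by
      refine ⟨hy0, by linarith, ?_⟩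
      push_neg at hbad
      by_cases hE : 0 < EE m y
      · exact Or.inr (hbad hE)
      · exact Or.inl (not_lt.1 hE)
    linarith [csInf_le hbdd hyT]
  -- bad at x₀ (closure)
  have hx₀bad : EE m x₀ ≤ 0 ∨ AA m x₀ ≤ 0 := by
    have hclosed : IsClosed {x : ℝ | EE m x ≤ 0 ∨ AA m x ≤ 0} := by
      have h1 : {x : ℝ | EE m x ≤ 0 ∨ AA m x ≤ 0}
          = {x : ℝ | EE m x ≤ 0} ∪ {x : ℝ | AA m x ≤ 0} := rfl
      rw [h1]
      exact (isClosed_le (contE m) continuous_const).union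
        (isClosed_le (contA m hm) continuous_const)
    have hsub : T ⊆ {x : ℝ | EE m x ≤ 0 ∨ AA m x ≤ 0} := fun t ht => ht.2.2
    have : x₀ ∈ closure T := csInf_mem_closure hne hbdd
    exact (hclosed.closure_subset_iff.2 hsub) this
  -- JJ positive and increasing on (0, x₀): in particular EE m x₀ > 0
  have hJpos : ∀ y, 0 < y → y < x₀ → 0 < JJ m y := by
    intro y hy0 hyx₀
    have := (hgood y hy0 hyx₀).1
    unfold JJ
    positivity
  have hDDpos : ∀ y, 0 < y → y < x₀ → 0 < DD m y := by
    intro y hy0 hyx₀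
    have hA := (hgood y hy0 hyx₀).2
    have hgnn : 0 ≤ gg m y := by
      unfold gg
      positivity
    have hident := identity1 m hm hy0 (by linarith : y ≤ (m:ℝ))
    have hJ := hJpos y hy0 hyx₀
    nlinarith [pow_pos hy0 (m+1), mul_nonneg hgnn hJ.le]
  have contJ : Continuous (JJ m) := (continuous_pow m).mul (contE m)
  have hEx₀pos : 0 < EE m x₀ := by
    have hmono : StrictMonoOn (JJ m) (Icc (x₀/2) x₀) := by
      apply strictMonoOn_of_deriv_pos (convex_Icc _ _) contJ.continuousOn
      intro y hy
      rw [interior_Icc] at hy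
      rw [(hasDerivAt_J m y).deriv]
      exact hDDpos y (by linarith [hy.1]) hy.2
    have h12 : JJ m (x₀/2) < JJ m x₀ :=
      hmono ⟨le_refl _, by linarith⟩ ⟨by linarith, le_refl _⟩ (by linarith)
    have hJx₀ : 0 < JJ m x₀ := lt_trans (hJpos (x₀/2) (by linarith) (by linarith)) h12
    by_contra hE
    push_neg at hE
    have : JJ m x₀ ≤ 0 := mul_nonpos_of_nonneg_of_nonpos (pow_pos hx₀pos m).le hE
    linarith
  have hAx₀neg : AA m x₀ ≤ 0 := by
    rcases hx₀bad with h | h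
    · linarith
    · exact h
  have hAx₀nonneg : 0 ≤ AA m x₀ := by
    have htend : Tendsto (AA m) (𝓝[<] x₀) (𝓝 (AA m x₀)) :=
      (contA m hm).continuousAt.mono_left nhdsWithin_le_nhds
    apply ge_of_tendsto htend
    filter_upwards [Ioo_mem_nhdsLT_of_mem
      (⟨by linarith, le_refl x₀⟩ : x₀ ∈ Ioc (x₀/2) x₀)] with y hy
    exact ((hgood y (by linarith [hy.1]) hy.2).2).le
  have hAx₀ : AA m x₀ = 0 := le_antisymm hAx₀neg hAx₀nonneg
  -- crossing contradiction
  set s := Real.sqrt ((m:ℝ)^2 - x₀^2) with hsdef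
  have hposs : (0:ℝ) < (m:ℝ)^2 - x₀^2 := by nlinarith
  have hs2 : s^2 = (m:ℝ)^2 - x₀^2 := Real.sq_sqrt hposs.le
  have hspos : 0 < s := Real.sqrt_pos.2 hposs
  have hJx₀ : 0 < JJ m x₀ := by
    unfold JJ; positivity
  have hcross : DD m x₀ = gg m x₀ * JJ m x₀ := by
    have := identity1 m hm hx₀pos (le_of_lt hx₀m)
    rw [hAx₀] at this
    rw [mul_zero] at this
    linarith
  have hgval : gg m x₀ = s / x₀ := rfl
  have hd := (hasDerivAt_D m hm x₀).sub
    ((hasDerivAt_g m hx₀pos hx₀m).mul (hasDerivAt_J m x₀))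
  rw [← hsdef] at hd
  have hDDval : DD m x₀ = s/x₀ * JJ m x₀ := by rw [hcross, hgval]
  have hval : D2 m x₀ - (-(m:ℝ)^2 / (s*x₀^2) * JJ m x₀ + gg m x₀ * DD m x₀)
      = JJ m x₀ / s := by
    rw [hgval]
    have hode := ode m x₀
    have h1 : D2 m x₀ = (-(x₀ * DD m x₀) - (x₀^2-(m:ℝ)^2)*JJ m x₀)/x₀^2 := by
      rw [eq_div_iff (by positivity : x₀^2 ≠ 0)]
      linarith [hode]
    rw [h1, hDDval]
    field_simp
    linear_combination (-(s+1)) * hs2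
  rw [hval] at hd
  apply no_cross hx₀pos hd (by positivity)
  · show DD m x₀ - gg m x₀ * JJ m x₀ = 0
    rw [hcross]; ring
  · intro y hy0 hyx₀
    have hident := identity1 m hm hy0 (by linarith : y ≤ (m:ℝ))
    have hA := (hgood y hy0 hyx₀).2
    have : (0:ℝ) < y^(m+1) * AA m y := by positivity
    show 0 < DD m y - gg m y * JJ m y
    linarith [hident]

lemma besselJ_eq (m : ℕ) {x : ℝ} (hx : 0 < x) : besselJ (m:ℝ) x = JJ m x := by
  unfold besselJ JJ EE
  rw [← tsum_mul_left]
  apply tsum_congr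
  intro k
  have hG : Real.Gamma ((m:ℝ)+(k:ℝ)+1) = ((m+k).factorial : ℝ) := by
    rw [show ((m:ℝ)+(k:ℝ)+1) = ((m+k:ℕ):ℝ)+1 by push_cast; ring, Real.Gamma_nat_eq_factorial]
  have hr : ((x:ℝ)/2) ^ (2*(k:ℝ)+(m:ℝ)) = (x/2)^(2*k+m) := by
    rw [show (2*(k:ℝ)+(m:ℝ)) = ((2*k+m:ℕ):ℝ) by push_cast; ring, Real.rpow_natCast]
  rw [hG, hr, div_pow, cc, pow_add]
  have h2 : ((2:ℝ))^(2*k+m) ≠ 0 := by positivity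
  have hf1 : ((k.factorial:ℝ)) ≠ 0 := by positivity
  have hf2 : (((m+k).factorial:ℝ)) ≠ 0 := by positivity
  field_simp


end BesselAux

/-- For all `0 < a < b ≤ 1` there exist `δ ∈ (0,1)` and `M` such that for all `m ≥ M`,
`0 < J_m(ma) ≤ (1-δ)^m J_m(mb)`; in particular `J_m(ma)/J_m(mb) → 0`. -/
theorem stmt12 (a b : ℝ) (ha : 0 < a) (hab : a < b) (hb : b ≤ 1) :
    (∃ δ ∈ Set.Ioo (0:ℝ) 1, ∃ M : ℕ, ∀ m : ℕ, M ≤ m →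
      0 < besselJ m ((m:ℝ) * a) ∧
      besselJ m ((m:ℝ) * a) ≤ (1 - δ) ^ m * besselJ m ((m:ℝ) * b)) ∧
    Filter.Tendsto (fun m : ℕ => besselJ m ((m:ℝ) * a) / besselJ m ((m:ℝ) * b))
      Filter.atTop (nhds 0) := by
  have ha1 : a < 1 := lt_of_lt_of_le hab hb
  set β : ℝ := (a+b)/2 with hβdef
  have hβa : a < β := by rw [hβdef]; linarith
  have hβb : β < b := by rw [hβdef]; linarith
  have hβ1 : β < 1 := by linarith
  have hβ0 : 0 < β := by rw [hβdef]; linarith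
  set κ : ℝ := Real.sqrt (1-β^2) / β with hκdef
  have h1β : (0:ℝ) < 1 - β^2 := by nlinarith
  have hκ0 : 0 < κ := by
    rw [hκdef]
    exact div_pos (Real.sqrt_pos.2 h1β) hβ0
  set c : ℝ := κ * (β - a) with hcdef
  have hc0 : 0 < c := by rw [hcdef]; exact mul_pos hκ0 (by linarith)
  set δ : ℝ := 1 - Real.exp (-c) with hδdef
  have hδ0 : 0 < δ := by
    rw [hδdef, sub_pos]
    rw [Real.exp_lt_one_iff]
    linarith
  have hδ1 : δ < 1 := by
    rw [hδdef]
    linarith [Real.exp_pos (-c)]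
  have h1δ : (1:ℝ) - δ = Real.exp (-c) := by rw [hδdef]; ring
  -- the key estimate for each m ≥ 1
  have key : ∀ m : ℕ, 1 ≤ m →
      0 < JJ m ((m:ℝ)*a) ∧ JJ m ((m:ℝ)*a) ≤ Real.exp (-(c*(m:ℝ))) * JJ m ((m:ℝ)*b) := by
    intro m hm
    have hm0 : (0:ℝ) < m := by exact_mod_cast hm
    have hma : 0 < (m:ℝ)*a := mul_pos hm0 ha
    have hmam : (m:ℝ)*a < m := by nlinarith
    have hmβ : (m:ℝ)*β < m := by nlinarith
    have hmβa : (m:ℝ)*a < (m:ℝ)*β := by nlinarith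
    have hmbβ : (m:ℝ)*β < (m:ℝ)*b := by nlinarith
    have hmbm : (m:ℝ)*b ≤ m := by nlinarith
    have hEA := pos_EA m hm
    -- positivity of DD on (0, m)
    have hDDpos : ∀ x : ℝ, 0 < x → x < m → 0 < DD m x := by
      intro x hx hxm
      obtain ⟨hE, hA⟩ := hEA x hx hxm
      have hgnn : 0 ≤ gg m x := by unfold gg; positivity
      have hJ : 0 < JJ m x := by unfold JJ; positivity
      have hid := identity1 m hm hx hxm.le
      nlinarith [pow_pos hx (m+1), mul_nonneg hgnn hJ.le]
    have hJpos : ∀ x : ℝ, 0 < x → x < m → 0 < JJ m x := by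
      intro x hx hxm
      have hE := (hEA x hx hxm).1
      unfold JJ; positivity
    -- gg ≥ κ on [ma, mβ]
    have hgκ : ∀ x : ℝ, 0 < x → x ≤ (m:ℝ)*β → κ ≤ gg m x := by
      intro x hx hxβ
      unfold gg
      rw [hκdef]
      have hββ : 0 < (m:ℝ)*β := by positivity
      have hsq : (m:ℝ) * Real.sqrt (1-β^2) ≤ Real.sqrt ((m:ℝ)^2 - x^2) := by
        rw [show (m:ℝ) * Real.sqrt (1-β^2) = Real.sqrt ((m:ℝ)^2 * (1-β^2)) by
          rw [Real.sqrt_mul (by positivity) _, Real.sqrt_sq hm0.le]]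
        apply Real.sqrt_le_sqrt
        nlinarith
      rw [div_le_div_iff₀ hβ0 hx]
      calc Real.sqrt (1-β^2) * x ≤ Real.sqrt (1-β^2) * ((m:ℝ)*β) := by
            apply mul_le_mul_of_nonneg_left hxβ (Real.sqrt_nonneg _)
        _ ≤ Real.sqrt ((m:ℝ)^2 - x^2) * β := by
            have := Real.sqrt_nonneg (1-β^2)
            nlinarith
    -- monotonicity of F = JJ * exp(-κx) on [ma, mβ]
    have hF : ∀ x : ℝ, HasDerivAt (fun y => JJ m y * Real.exp (-κ*y))
        ((DD m x - κ * JJ m x) * Real.exp (-κ*x)) x := by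
      intro x
      have he : HasDerivAt (fun y : ℝ => Real.exp (-κ*y)) (Real.exp (-κ*x) * (-κ)) x := by
        have := ((hasDerivAt_id x).const_mul (-κ)).exp
        simpa using this
      have := (hasDerivAt_J m x).mul he
      exact this.congr_deriv (by ring)
    have hmono : MonotoneOn (fun y => JJ m y * Real.exp (-κ*y)) (Icc ((m:ℝ)*a) ((m:ℝ)*β)) := by
      apply monotoneOn_of_deriv_nonneg (convex_Icc _ _)
      · exact Continuous.continuousOn (by
          exact ((continuous_pow m).mul (contE m)).mul (Real.continuous_exp.comp (by continuity)))
      · intro x hx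
        exact (hF x).differentiableAt.differentiableWithinAt
      · intro x hx
        rw [interior_Icc] at hx
        rw [(hF x).deriv]
        have hx0 : 0 < x := lt_trans hma hx.1
        have hxm : x < (m:ℝ) := lt_trans hx.2 hmβ
        have hJ := hJpos x hx0 hxm
        have hDD := hDDpos x hx0 hxm
        have hgx := hgκ x hx0 hx.2.le
        have hid := identity1 m hm hx0 hxm.le
        have hA := (hEA x hx0 hxm).2
        have hggJ : κ * JJ m x ≤ gg m x * JJ m x := mul_le_mul_of_nonneg_right hgx hJ.le
        have hx1 : 0 < x^(m+1) * AA m x := by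
          have := (hEA x hx0 hxm).2
          positivity
        have : κ * JJ m x ≤ DD m x := by nlinarith
        have hexp := Real.exp_pos (-κ*x)
        nlinarith
    -- JJ monotone on [mβ, mb]
    have hmono2 : MonotoneOn (JJ m) (Icc ((m:ℝ)*β) ((m:ℝ)*b)) := by
      apply monotoneOn_of_deriv_nonneg (convex_Icc _ _)
      · exact Continuous.continuousOn ((continuous_pow m).mul (contE m))
      · intro x hx
        exact (hasDerivAt_J m x).differentiableAt.differentiableWithinAt
      · intro x hx
        rw [interior_Icc] at hx
        rw [(hasDerivAt_J m x).deriv]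
        have hx0 : 0 < x := by
          have : (0:ℝ) < (m:ℝ)*β := by positivity
          linarith [hx.1]
        exact (hDDpos x hx0 (lt_of_lt_of_le hx.2 hmbm)).le
    have hJa := hJpos ((m:ℝ)*a) hma hmam
    have hJβ := hJpos ((m:ℝ)*β) (by positivity) hmβ
    refine ⟨hJa, ?_⟩
    have h1 : JJ m ((m:ℝ)*a) * Real.exp (-κ*((m:ℝ)*a))
        ≤ JJ m ((m:ℝ)*β) * Real.exp (-κ*((m:ℝ)*β)) := by
      apply hmono ⟨le_refl _, hmβa.le⟩ ⟨hmβa.le, le_refl _⟩ hmβa.le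
    have h2 : JJ m ((m:ℝ)*β) ≤ JJ m ((m:ℝ)*b) :=
      hmono2 ⟨le_refl _, hmbβ.le⟩ ⟨hmbβ.le, le_refl _⟩ hmbβ.le
    have hea := Real.exp_pos (-κ*((m:ℝ)*a))
    have heβ := Real.exp_pos (-κ*((m:ℝ)*β))
    -- JJ(ma) ≤ JJ(mβ) * exp(κ m a - κ m β) = JJ(mβ) * exp(-c m)
    have h3 : JJ m ((m:ℝ)*a) ≤ JJ m ((m:ℝ)*β) * Real.exp (-(c*(m:ℝ))) := by
      have he : Real.exp (-(c*(m:ℝ))) * Real.exp (-κ*((m:ℝ)*a)) = Real.exp (-κ*((m:ℝ)*β)) := by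
        rw [← Real.exp_add]
        congr 1
        rw [hcdef]
        ring
      have h1' : JJ m ((m:ℝ)*a) * Real.exp (-κ*((m:ℝ)*a))
          ≤ (JJ m ((m:ℝ)*β) * Real.exp (-(c*(m:ℝ)))) * Real.exp (-κ*((m:ℝ)*a)) := by
        rw [mul_assoc, he]
        exact h1
      exact le_of_mul_le_mul_right h1' hea
    calc JJ m ((m:ℝ)*a) ≤ JJ m ((m:ℝ)*β) * Real.exp (-(c*(m:ℝ))) := h3
      _ ≤ JJ m ((m:ℝ)*b) * Real.exp (-(c*(m:ℝ))) := by
          apply mul_le_mul_of_nonneg_right h2 (Real.exp_pos _).le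
      _ = Real.exp (-(c*(m:ℝ))) * JJ m ((m:ℝ)*b) := by ring
  have hJb_pos : ∀ m : ℕ, 1 ≤ m → 0 < JJ m ((m:ℝ)*b) := by
    intro m hm
    obtain ⟨hpos, hineq⟩ := key m hm
    nlinarith [Real.exp_pos (-(c*(m:ℝ)))]
  have main : ∀ m : ℕ, 1 ≤ m →
      0 < besselJ m ((m:ℝ) * a) ∧
      besselJ m ((m:ℝ) * a) ≤ (1 - δ) ^ m * besselJ m ((m:ℝ) * b) := by
    intro m hm
    have hm0 : (0:ℝ) < m := by exact_mod_cast hm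
    have hma : 0 < (m:ℝ)*a := mul_pos hm0 ha
    have hmb : 0 < (m:ℝ)*b := mul_pos hm0 (lt_trans ha hab)
    obtain ⟨hpos, hineq⟩ := key m hm
    rw [besselJ_eq m hma, besselJ_eq m hmb]
    refine ⟨hpos, ?_⟩
    rw [h1δ]
    have hexp : Real.exp (-c) ^ m = Real.exp (-(c*(m:ℝ))) := by
      rw [← Real.exp_nat_mul]
      congr 1
      ring
    rw [hexp]
    exact hineq
  constructor
  · exact ⟨δ, ⟨hδ0, hδ1⟩, 1, main⟩
  · have h1δnn : (0:ℝ) ≤ 1 - δ := by rw [h1δ]; exact (Real.exp_pos _).le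
    apply squeeze_zero' (g := fun m : ℕ => (1-δ)^m)
    · filter_upwards [eventually_ge_atTop 1] with m hm
      have hm0 : (0:ℝ) < m := by exact_mod_cast hm
      have hma : 0 < (m:ℝ)*a := mul_pos hm0 ha
      have hmb : 0 < (m:ℝ)*b := mul_pos hm0 (lt_trans ha hab)
      rw [besselJ_eq m hma, besselJ_eq m hmb]
      exact div_nonneg (key m hm).1.le (hJb_pos m hm).le
    · filter_upwards [eventually_ge_atTop 1] with m hm
      have hm0 : (0:ℝ) < m := by exact_mod_cast hm
      have hma : 0 < (m:ℝ)*a := mul_pos hm0 ha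
      have hmb : 0 < (m:ℝ)*b := mul_pos hm0 (lt_trans ha hab)
      rw [besselJ_eq m hma, besselJ_eq m hmb]
      rw [div_le_iff₀ (hJb_pos m hm)]
      have := (main m hm).2
      rw [besselJ_eq m hma, besselJ_eq m hmb] at this
      linarith
    · exact tendsto_pow_atTop_nhds_zero_of_lt_one h1δnn (by linarith)
end

section
/- Let a > 1 and let (k_m)_{m≥1} be any sequence of positive reals with k_m/m → a as m → ∞. Then for every τ ∈ (1/a, 1), liminf_{m→∞} [ ∫₀^τ J_m(k_m r)² r dr ] / [ ∫₀^1 J_m(k_m r)² r dr ] > 0; i.e. a Bessel mode whose wavenumber exceeds the turning point keeps a positive fraction of its L² mass in the interior disk of radius τ and is therefore not boundary-localized. -/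
open MeasureTheory Filter Set

set_option maxHeartbeats 1000000

namespace Stmt18aux

/-- Growth condition: absolutely summable against all geometric weights. -/
def Gro (c : ℕ → ℝ) : Prop := ∀ r : ℝ, 0 ≤ r → Summable fun n => |c n| * r ^ n

theorem Gro.summable {c : ℕ → ℝ} (hc : Gro c) (x : ℝ) :
    Summable fun n => c n * x ^ n := by
  apply Summable.of_abs
  have := hc |x| (abs_nonneg x)
  refine this.congr fun n => ?_
  rw [abs_mul, abs_pow]

theorem Gro.add {c d : ℕ → ℝ} (hc : Gro c) (hd : Gro d) : Gro fun n => c n + d n := by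
  intro r hr
  refine Summable.of_nonneg_of_le (fun n => by positivity) (fun n => ?_) ((hc r hr).add (hd r hr))
  have : |c n + d n| ≤ |c n| + |d n| := abs_add_le _ _
  nlinarith [pow_nonneg hr n]

theorem Gro.const_mul {c : ℕ → ℝ} (hc : Gro c) (a : ℝ) : Gro fun n => a * c n := by
  intro r hr
  refine ((hc r hr).mul_left |a|).congr fun n => ?_
  rw [abs_mul]; ring

theorem Gro.nat_mul {c : ℕ → ℝ} (hc : Gro c) : Gro fun n => (n : ℝ) * c n := by
  intro r hr
  refine Summable.of_nonneg_of_le (fun n => by positivity) (fun n => ?_) (hc (2 * r) (by linarith))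
  have h1 : |(n : ℝ) * c n| = (n : ℝ) * |c n| := by
    rw [abs_mul, Nat.abs_cast]
  rw [h1]
  have h2 : (n : ℝ) ≤ 2 ^ n := by
    exact_mod_cast (Nat.lt_two_pow_self (n := n)).le
  have h3 : (n : ℝ) * r ^ n ≤ 2 ^ n * r ^ n := by
    apply mul_le_mul_of_nonneg_right h2 (pow_nonneg hr n)
  calc (n : ℝ) * |c n| * r ^ n = |c n| * ((n:ℝ) * r ^ n) := by ring
    _ ≤ |c n| * (2 ^ n * r ^ n) := by
        apply mul_le_mul_of_nonneg_left h3 (abs_nonneg _)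
    _ = |c n| * (2 * r) ^ n := by rw [mul_pow]

theorem Gro.shift {c : ℕ → ℝ} (hc : Gro c) : Gro fun n => c (n + 1) := by
  intro r hr
  rcases eq_or_lt_of_le hr with h0 | h0
  · apply summable_of_ne_finset_zero (s := {0})
    intro n hn
    simp only [Finset.mem_singleton] at hn
    rw [← h0, zero_pow hn, mul_zero]
  · have h1 : Summable fun n => |c (n + 1)| * r ^ (n + 1) :=
      ((summable_nat_add_iff 1).2 (hc r hr))
    refine (h1.div_const r).congr fun n => ?_
    field_simp [h0.ne']
    ring

/-- The derivative coefficient sequence. -/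
def D (c : ℕ → ℝ) : ℕ → ℝ := fun n => ((n : ℝ) + 1) * c (n + 1)

theorem Gro.D {c : ℕ → ℝ} (hc : Gro c) : Gro (Stmt18aux.D c) := by
  have h1 : Gro fun n => (n : ℝ) * c (n + 1) := hc.shift.nat_mul
  have h2 := (h1.add hc.shift)
  refine fun r hr => ((h2 r hr).congr fun n => ?_)
  simp only [Stmt18aux.D]; ring_nf

/-- Sum of the power series. -/
noncomputable def S (c : ℕ → ℝ) (x : ℝ) : ℝ := ∑' n, c n * x ^ n

theorem hasDerivAt_S {c : ℕ → ℝ} (hc : Gro c) (x : ℝ) :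
    HasDerivAt (S c) (S (Stmt18aux.D c) x) x := by
  set R : ℝ := |x| + 1 with hR
  have hR0 : 0 < R := by positivity
  have hxR : x ∈ Metric.ball (0 : ℝ) R := by
    simp only [Metric.mem_ball, dist_zero_right, Real.norm_eq_abs, hR]
    linarith
  have hunif : TendstoUniformlyOn
      (fun (t : Finset ℕ) y => ∑ n ∈ t, Stmt18aux.D c n * y ^ n)
      (fun y => ∑' n, Stmt18aux.D c n * y ^ n) atTop (Metric.ball (0:ℝ) R) := by
    apply tendstoUniformlyOn_tsum (hc.D R hR0.le)
    intro n y hy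
    have hyR : |y| ≤ R := by
      simp only [Metric.mem_ball, dist_zero_right, Real.norm_eq_abs] at hy
      exact hy.le
    have h : |Stmt18aux.D c n * y ^ n| = |Stmt18aux.D c n| * |y| ^ n := by
      rw [abs_mul, abs_pow]
    rw [Real.norm_eq_abs, h]
    exact mul_le_mul_of_nonneg_left (pow_le_pow_left₀ (abs_nonneg y) hyR n) (abs_nonneg _)
  have key : HasDerivAt (fun y => ∑' n, c (n + 1) * y ^ (n + 1))
      ((fun y => ∑' n, Stmt18aux.D c n * y ^ n) x) x := by
    refine hasDerivAt_of_tendstoUniformlyOn (f := fun (t : Finset ℕ) y => ∑ n ∈ t, c (n+1) * y ^ (n+1)) Metric.isOpen_ball hunif ?_ ?_ hxR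
    · filter_upwards with t y _
      apply HasDerivAt.fun_sum
      intro i _
      have h := (hasDerivAt_pow (i+1) y).const_mul (c (i+1))
      convert h using 1
      · rfl
      simp only [Stmt18aux.D]
      push_cast
      ring
    · intro y _
      have hs : Summable fun n => c (n + 1) * y ^ (n + 1) :=
        (summable_nat_add_iff 1).2 (hc.summable y)
      exact hs.hasSum
  have hfun : S c = fun y => c 0 + ∑' n, c (n + 1) * y ^ (n + 1) := by
    funext y
    rw [S, Summable.tsum_eq_zero_add (hc.summable y)]
    simp
  rw [hfun]
  exact key.const_add (c 0)

theorem continuous_S {c : ℕ → ℝ} (hc : Gro c) : Continuous (S c) := by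
  rw [continuous_iff_continuousAt]
  exact fun x => (hasDerivAt_S hc x).continuousAt

theorem S_zero {c : ℕ → ℝ} (hc : Gro c) : S c 0 = c 0 := by
  rw [S, tsum_eq_single 0 (fun n hn => by rw [zero_pow hn, mul_zero])]
  simp



theorem tsum_pow_shift2 {c : ℕ → ℝ} (hc : Gro c) (x : ℝ) :
    ∑' n, c n * x ^ (n + 2) = x ^ 2 * S c x := by
  rw [S, ← tsum_mul_left]
  exact tsum_congr fun n => by ring

theorem ode {c : ℕ → ℝ} (hc : Gro c) (μ : ℝ) (h0 : c 0 = 0) (h1 : c 1 = 0)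
    (hrec : ∀ n : ℕ, (((n : ℝ) + 2) ^ 2 - μ ^ 2) * c (n + 2) + c n = 0) (x : ℝ) :
    x ^ 2 * S (D (D c)) x + x * S (D c) x + (x ^ 2 - μ ^ 2) * S c x = 0 := by
  set u : ℕ → ℝ := fun n => ((n : ℝ) ^ 2 - μ ^ 2) * c n * x ^ n with hu
  set v : ℕ → ℝ := fun n => (n : ℝ) * ((n : ℝ) - 1) * c n * x ^ n with hv
  set w : ℕ → ℝ := fun n => (n : ℝ) * c n * x ^ n with hw
  set z : ℕ → ℝ := fun n => -(μ ^ 2) * c n * x ^ n with hz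
  have hsv : Summable v := by
    have h1 : Summable fun n : ℕ => ((n:ℝ) * ((n:ℝ) * c n)) * x ^ n := (hc.nat_mul.nat_mul).summable x
    have h2 : Summable fun n : ℕ => ((n:ℝ) * c n) * x ^ n := hc.nat_mul.summable x
    exact (h1.sub h2).congr fun n => by simp only [hv]; ring
  have hsw : Summable w := hc.nat_mul.summable x
  have hsz : Summable z := (hc.const_mul (-(μ^2))).summable x
  have hsu : Summable u := by
    refine ((hsv.add hsw).add hsz).congr fun n => ?_
    simp only [hv, hw, hz, hu]; ring
  -- Step 1 : x^2 * S (D (D c)) x = ∑' v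
  have s1 : x ^ 2 * S (D (D c)) x = ∑' n, v n := by
    have e1 : x ^ 2 * S (D (D c)) x = ∑' n, v (n + 2) := by
      rw [S, ← tsum_mul_left]
      refine tsum_congr fun n => ?_
      simp only [Stmt18aux.D, hv]
      push_cast
      ring
    have e2 : ∑' n, v n = v 0 + (v 1 + ∑' n, v (n + 2)) := by
      rw [Summable.tsum_eq_zero_add hsv, Summable.tsum_eq_zero_add ((summable_nat_add_iff 1).2 hsv)]
    have v0 : v 0 = 0 := by simp [hv]
    have v1 : v 1 = 0 := by simp [hv]
    rw [e1, e2, v0, v1, zero_add, zero_add]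
  -- Step 2 : x * S (D c) x = ∑' w
  have s2 : x * S (D c) x = ∑' n, w n := by
    have e1 : x * S (D c) x = ∑' n, w (n + 1) := by
      rw [S, ← tsum_mul_left]
      refine tsum_congr fun n => ?_
      simp only [Stmt18aux.D, hw]
      push_cast
      ring
    have e2 : ∑' n, w n = w 0 + ∑' n, w (n + 1) := Summable.tsum_eq_zero_add hsw
    have w0 : w 0 = 0 := by simp [hw]
    rw [e1, e2, w0, zero_add]
  -- Step 3 : -μ^2 * S c x = ∑' z
  have s3 : -(μ ^ 2) * S c x = ∑' n, z n := by
    rw [S, ← tsum_mul_left]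
    exact tsum_congr fun n => by simp only [hz]; ring
  -- Combine : x^2 S'' + x S' - μ^2 S = ∑' u
  have s4 : x ^ 2 * S (D (D c)) x + x * S (D c) x + -(μ ^ 2) * S c x = ∑' n, u n := by
    rw [s1, s2, s3, ← Summable.tsum_add hsv hsw, ← Summable.tsum_add (hsv.add hsw) hsz]
    refine tsum_congr fun n => ?_
    simp only [hv, hw, hz, hu]; ring
  -- Step 5 : ∑' u = - (x^2 * S c x)
  have s5 : ∑' n, u n = -(x ^ 2 * S c x) := by
    have e2 : ∑' n, u n = u 0 + (u 1 + ∑' n, u (n + 2)) := by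
      rw [Summable.tsum_eq_zero_add hsu, Summable.tsum_eq_zero_add ((summable_nat_add_iff 1).2 hsu)]
    have u0 : u 0 = 0 := by simp [hu, h0]
    have u1 : u 1 = 0 := by simp [hu, h1]
    have e3 : ∀ n : ℕ, u (n + 2) = -(c n * x ^ (n + 2)) := by
      intro n
      have h := hrec n
      have hcoef : (((n + 2 : ℕ) : ℝ) ^ 2 - μ ^ 2) * c (n + 2) = -(c n) := by
        push_cast
        linarith
      simp only [hu]
      rw [hcoef]
      ring
    rw [e2, u0, u1, zero_add, zero_add]
    rw [tsum_congr e3, tsum_neg, tsum_pow_shift2 hc x]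
  linarith [s4, s5]


/-- Coefficient `a_k` of `x^(m+2k)` in `J_m`. -/
noncomputable def aa (m k : ℕ) : ℝ :=
  (-1) ^ k / ((k.factorial : ℝ) * ((m + k).factorial : ℝ) * 2 ^ (m + 2 * k))

/-- The full coefficient sequence of `J_m` as a power series in `x`. -/
noncomputable def cc (m : ℕ) : ℕ → ℝ := fun n =>
  if m ≤ n ∧ 2 ∣ (n - m) then aa m ((n - m) / 2) else 0

theorem cc_apply (m k : ℕ) : cc m (m + 2 * k) = aa m k := by
  have h2 : (m + 2 * k) - m = 2 * k := by omega
  simp only [cc, h2]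
  rw [if_pos ⟨Nat.le_add_right _ _, ⟨k, rfl⟩⟩]
  congr 1
  omega

theorem cc_not_range {m n : ℕ} (h : ∀ k, n ≠ m + 2 * k) : cc m n = 0 := by
  rw [cc, if_neg]
  rintro ⟨h1, k, hk⟩
  exact h k (by omega)

theorem abs_aa (m k : ℕ) :
    |aa m k| = 1 / ((k.factorial : ℝ) * ((m + k).factorial : ℝ) * 2 ^ (m + 2 * k)) := by
  rw [aa, abs_div, abs_pow, abs_neg, abs_one, one_pow]
  congr 1
  exact abs_of_pos (by positivity)

theorem abs_aa_le (m k : ℕ) : |aa m k| ≤ (1 / 4) ^ k / (k.factorial : ℝ) := by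
  rw [abs_aa, div_pow, one_pow, div_div]
  apply one_div_le_one_div_of_le (by positivity)
  have h1 : (1:ℝ) ≤ ((m + k).factorial : ℝ) := by
    exact_mod_cast Nat.one_le_iff_ne_zero.2 (Nat.factorial_ne_zero _)
  have h2 : (4:ℝ) ^ k ≤ 2 ^ (m + 2 * k) := by
    calc (4:ℝ) ^ k = 2 ^ (2 * k) := by rw [pow_mul]; norm_num
      _ ≤ 2 ^ (m + 2 * k) := pow_le_pow_right₀ one_le_two (by omega)
  have h3 : (0:ℝ) < (k.factorial : ℝ) := by positivity
  have h6 : (0:ℝ) < (2:ℝ) ^ (m + 2 * k) := by positivity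
  nlinarith [mul_le_mul_of_nonneg_right h2 h3.le,
    mul_le_mul_of_nonneg_left h1 (mul_pos h3 h6).le]

theorem gro_cc (m : ℕ) : Gro (cc m) := by
  intro r hr
  have hi : Function.Injective (fun k : ℕ => m + 2 * k) := fun a b hab => by
    simp only at hab; omega
  have hz : ∀ x ∉ Set.range (fun k : ℕ => m + 2 * k), |cc m x| * r ^ x = 0 := by
    intro x hx
    have h0 : cc m x = 0 := cc_not_range (fun k hk => hx ⟨k, hk.symm⟩)
    rw [h0, abs_zero, zero_mul]
  rw [← hi.summable_iff (f := fun n => |cc m n| * r ^ n) hz]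
  · have hs : Summable fun k : ℕ => r ^ m * ((r ^ 2 / 4) ^ k / (k.factorial : ℝ)) :=
      (Real.summable_pow_div_factorial (r ^ 2 / 4)).mul_left _
    have hcomp : ((fun n => |cc m n| * r ^ n) ∘ fun k : ℕ => m + 2 * k) =
        fun k : ℕ => |aa m k| * r ^ (m + 2 * k) := by
      funext k
      simp only [Function.comp_apply, cc_apply]
    rw [hcomp]
    refine Summable.of_nonneg_of_le (fun k => by positivity) (fun k => ?_) hs
    have hb := abs_aa_le m k
    have hrp : r ^ (m + 2 * k) = r ^ m * (r ^ 2) ^ k := by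
      rw [← pow_mul, ← pow_add]
    calc |aa m k| * r ^ (m + 2 * k) ≤ ((1/4) ^ k / (k.factorial : ℝ)) * (r ^ m * (r^2) ^ k) := by
           rw [hrp]
           exact mul_le_mul hb le_rfl (by positivity) (by positivity)
      _ = r ^ m * ((r ^ 2 / 4) ^ k / (k.factorial : ℝ)) := by
           rw [div_pow, div_pow, one_pow]
           ring

theorem besselJ_eq_S (m : ℕ) (x : ℝ) : besselJ m x = S (cc m) x := by
  have hi : Function.Injective (fun k : ℕ => m + 2 * k) := fun a b hab => by
    simp only at hab; omega
  have hterm : ∀ k : ℕ,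
      ((-1 : ℝ) ^ k / ((k.factorial : ℝ) * Real.Gamma ((m:ℝ) + (k : ℝ) + 1))) *
        (x / 2) ^ (2 * (k : ℝ) + (m:ℝ)) = cc m (m + 2 * k) * x ^ (m + 2 * k) := by
    intro k
    rw [cc_apply]
    have hg : Real.Gamma ((m:ℝ) + (k : ℝ) + 1) = ((m + k).factorial : ℝ) := by
      rw [show (m:ℝ) + (k:ℝ) = ((m + k : ℕ) : ℝ) by push_cast; ring]
      exact Real.Gamma_nat_eq_factorial (m + k)
    have hp : (x / 2 : ℝ) ^ (2 * (k : ℝ) + (m:ℝ)) = (x / 2) ^ (m + 2 * k : ℕ) := by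
      rw [show 2 * (k:ℝ) + (m:ℝ) = ((m + 2 * k : ℕ) : ℝ) by push_cast; ring]
      exact Real.rpow_natCast _ _
    rw [hg, hp, div_pow, aa]
    have hf1 : ((k.factorial : ℝ)) ≠ 0 := by positivity
    have hf2 : (((m+k).factorial : ℝ)) ≠ 0 := by positivity
    have hf3 : (2:ℝ) ^ (m + 2*k) ≠ 0 := by positivity
    field_simp
    try ring
  rw [besselJ, tsum_congr hterm, S]
  refine hi.tsum_eq (f := fun n => cc m n * x ^ n) ?_
  intro n hn
  rw [Function.mem_support] at hn
  by_contra hmem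
  apply hn
  have hnr : ∀ k, n ≠ m + 2 * k := fun k hk => hmem ⟨k, hk.symm⟩
  rw [cc_not_range hnr, zero_mul]

theorem cc_zero {m : ℕ} (hm : 1 ≤ m) : cc m 0 = 0 :=
  if_neg (by rintro ⟨h, _⟩; omega)

theorem cc_one {m : ℕ} (hm : 2 ≤ m) : cc m 1 = 0 :=
  if_neg (by rintro ⟨h, hd⟩; interval_cases m <;> simp_all <;> omega)

theorem cc_rec (m : ℕ) (n : ℕ) :
    (((n : ℝ) + 2) ^ 2 - (m : ℝ) ^ 2) * cc m (n + 2) + cc m n = 0 := by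
  rcases le_or_gt m n with hmn | hmn
  · by_cases hd : 2 ∣ (n - m)
    · obtain ⟨k, hk⟩ : ∃ k, n = m + 2 * k := by
        obtain ⟨t, ht⟩ := hd
        exact ⟨t, by omega⟩
      subst hk
      have h2 : m + 2 * k + 2 = m + 2 * (k + 1) := by ring
      rw [h2, cc_apply, cc_apply, aa, aa]
      have e1 : (k+1).factorial = (k+1) * k.factorial := Nat.factorial_succ k
      have e2 : (m + (k+1)).factorial = (m + k + 1) * (m + k).factorial := by
        rw [show m + (k+1) = (m + k) + 1 by ring]
        exact Nat.factorial_succ (m+k)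
      have e3 : (2:ℝ) ^ (m + 2 * (k+1)) = 2 ^ (m + 2*k) * 4 := by
        rw [show m + 2*(k+1) = (m + 2*k) + 2 by ring, pow_add]
        norm_num
      rw [e1, e2, e3]
      have hf1 : ((k.factorial : ℝ)) ≠ 0 := by positivity
      have hf2 : (((m+k).factorial : ℝ)) ≠ 0 := by positivity
      have hf3 : (2:ℝ) ^ (m + 2*k) ≠ 0 := by positivity
      push_cast
      field_simp
      ring
    · have hz1 : cc m (n + 2) = 0 := by
        apply cc_not_range
        intro k hk
        exact hd ⟨k - 1, by omega⟩
      have hz2 : cc m n = 0 := by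
        apply cc_not_range
        intro k hk
        exact hd ⟨k, by omega⟩
      rw [hz1, hz2]; ring
  · have hz2 : cc m n = 0 := cc_not_range (fun k hk => by omega)
    by_cases hm2 : m = n + 2
    · have : ((n:ℝ) + 2) ^ 2 - (m:ℝ) ^ 2 = 0 := by
        rw [hm2]; push_cast; ring
      rw [this, hz2]; ring
    · have hz1 : cc m (n + 2) = 0 := cc_not_range (fun k hk => by omega)
      rw [hz1, hz2]; ring


/-- The Bessel function of order `m` as an entire power series sum. -/
noncomputable def Jf (m : ℕ) : ℝ → ℝ := S (cc m)
noncomputable def Jf' (m : ℕ) : ℝ → ℝ := S (Stmt18aux.D (cc m))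
noncomputable def Jf'' (m : ℕ) : ℝ → ℝ := S (Stmt18aux.D (Stmt18aux.D (cc m)))

/-- The energy function. -/
noncomputable def Ef (m : ℕ) (y : ℝ) : ℝ :=
  y ^ 2 * (Jf' m y) ^ 2 + (y ^ 2 - (m:ℝ) ^ 2) * (Jf m y) ^ 2

theorem hasDerivAt_Jf (m : ℕ) (x : ℝ) : HasDerivAt (Jf m) (Jf' m x) x :=
  hasDerivAt_S (gro_cc m) x

theorem hasDerivAt_Jf' (m : ℕ) (x : ℝ) : HasDerivAt (Jf' m) (Jf'' m x) x :=
  hasDerivAt_S (gro_cc m).D x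

theorem continuous_Jf (m : ℕ) : Continuous (Jf m) := continuous_S (gro_cc m)

theorem ode_J {m : ℕ} (hm : 2 ≤ m) (x : ℝ) :
    x ^ 2 * Jf'' m x + x * Jf' m x + (x ^ 2 - (m:ℝ) ^ 2) * Jf m x = 0 :=
  ode (gro_cc m) (m:ℝ) (cc_zero (by omega)) (cc_one hm) (cc_rec m) x

theorem hasDerivAt_Ef {m : ℕ} (hm : 2 ≤ m) (y : ℝ) :
    HasDerivAt (Ef m) (2 * y * (Jf m y) ^ 2) y := by
  have h1 : HasDerivAt (Jf m) (Jf' m y) y := hasDerivAt_Jf m y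
  have h2 : HasDerivAt (Jf' m) (Jf'' m y) y := hasDerivAt_Jf' m y
  have hy2 : HasDerivAt (fun t : ℝ => t ^ 2) (2 * y) y := by
    simpa using hasDerivAt_pow 2 y
  have hy2m : HasDerivAt (fun t : ℝ => t ^ 2 - (m:ℝ) ^ 2) (2 * y) y := hy2.sub_const _
  have hJ2 : HasDerivAt (fun t => (Jf m t) ^ 2) (2 * Jf m y * Jf' m y) y := by
    simpa using h1.fun_pow 2
  have hJ'2 : HasDerivAt (fun t => (Jf' m t) ^ 2) (2 * Jf' m y * Jf'' m y) y := by
    simpa using h2.fun_pow 2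
  have hE : HasDerivAt (Ef m)
      (2 * y * (Jf' m y) ^ 2 + y ^ 2 * (2 * Jf' m y * Jf'' m y) +
        (2 * y * (Jf m y) ^ 2 + (y ^ 2 - (m:ℝ) ^ 2) * (2 * Jf m y * Jf' m y))) y := by
    have hA : HasDerivAt (fun t : ℝ => t ^ 2 * (Jf' m t) ^ 2)
        (2 * y * (Jf' m y) ^ 2 + y ^ 2 * (2 * Jf' m y * Jf'' m y)) y := hy2.mul hJ'2
    have hB : HasDerivAt (fun t : ℝ => (t ^ 2 - (m:ℝ) ^ 2) * (Jf m t) ^ 2)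
        (2 * y * (Jf m y) ^ 2 + (y ^ 2 - (m:ℝ) ^ 2) * (2 * Jf m y * Jf' m y)) y := hy2m.mul hJ2
    exact hA.add hB
  convert hE using 1
  have hode := ode_J hm y
  linear_combination (-2 * Jf' m y) * hode

theorem Jf_zero {m : ℕ} (hm : 2 ≤ m) : Jf m 0 = 0 := by
  rw [Jf, S_zero (gro_cc m), cc_zero (by omega)]

theorem integral_eq {m : ℕ} (hm : 2 ≤ m) {k : ℝ} (hk : 0 < k) (x : ℝ) :
    ∫ r in (0:ℝ)..x, (Jf m (k * r)) ^ 2 * r = Ef m (k * x) / (2 * k ^ 2) := by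
  have hΦ : ∀ t : ℝ, HasDerivAt (fun r => Ef m (k * r) / (2 * k ^ 2)) ((Jf m (k * t)) ^ 2 * t) t := by
    intro t
    have h1 : HasDerivAt (fun r : ℝ => k * r) k t := by simpa using (hasDerivAt_id t).const_mul k
    have h2 := (hasDerivAt_Ef hm (k * t)).comp t h1
    have h3 := h2.div_const (2 * k ^ 2)
    convert h3 using 1
    · rfl
    · rfl
    · rfl
    field_simp [hk.ne']
  have hint : IntervalIntegrable (fun r => (Jf m (k * r)) ^ 2 * r) volume 0 x := by
    apply Continuous.intervalIntegrable
    exact (((continuous_Jf m).comp (continuous_const.mul continuous_id)).pow 2).mul continuous_id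
  rw [intervalIntegral.integral_eq_sub_of_hasDerivAt (fun t _ => hΦ t) hint]
  have hJ0 : Jf m 0 = 0 := Jf_zero hm
  simp [Ef, hJ0]

theorem Ef_antitone {m : ℕ} (hm : 2 ≤ m) {y1 y2 : ℝ} (hy1 : (m:ℝ) < y1) (h12 : y1 ≤ y2) :
    Ef m y2 / (y2 ^ 2 - (m:ℝ) ^ 2) ≤ Ef m y1 / (y1 ^ 2 - (m:ℝ) ^ 2) := by
  have hm0 : (0:ℝ) < (m:ℝ) := by exact_mod_cast (by omega : 0 < m)
  set F : ℝ → ℝ := fun y => Ef m y / (y ^ 2 - (m:ℝ) ^ 2) with hF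
  have hne : ∀ y ∈ Icc y1 y2, y ^ 2 - (m:ℝ) ^ 2 ≠ 0 := by
    intro y hy
    have : (m:ℝ) < y := lt_of_lt_of_le hy1 hy.1
    nlinarith
  have hcontE : Continuous (Ef m) := by
    rw [continuous_iff_continuousAt]
    exact fun y => (hasDerivAt_Ef hm y).continuousAt
  have hdF : ∀ y ∈ Ioo y1 y2, HasDerivAt F
      ((2 * y * (Jf m y) ^ 2 * (y ^ 2 - (m:ℝ) ^ 2) - Ef m y * (2 * y)) / (y ^ 2 - (m:ℝ) ^ 2) ^ 2) y := by
    intro y hy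
    have hy2m : HasDerivAt (fun t : ℝ => t ^ 2 - (m:ℝ) ^ 2) (2 * y) y :=
      (by simpa using hasDerivAt_pow 2 y : HasDerivAt (fun t : ℝ => t ^ 2) (2 * y) y).sub_const _
    exact (hasDerivAt_Ef hm y).div hy2m (hne y (Ioo_subset_Icc_self hy))
  have key : AntitoneOn F (Icc y1 y2) := by
    apply antitoneOn_of_deriv_nonpos (convex_Icc _ _)
    · exact (hcontE.continuousOn).div ((continuous_pow 2).sub continuous_const).continuousOn hne
    · rw [interior_Icc]
      intro y hy
      exact (hdF y hy).differentiableAt.differentiableWithinAt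
    · rw [interior_Icc]
      intro y hy
      rw [(hdF y hy).deriv]
      have hnum : 2 * y * (Jf m y) ^ 2 * (y ^ 2 - (m:ℝ) ^ 2) - Ef m y * (2 * y) =
          -(2 * y ^ 3 * (Jf' m y) ^ 2) := by
        rw [Ef]; ring
      rw [hnum]
      have hy0 : 0 < y := lt_trans hm0 (lt_trans hy1 hy.1)
      apply div_nonpos_of_nonpos_of_nonneg
      · nlinarith [sq_nonneg (Jf' m y), pow_pos hy0 3]
      · positivity
  rcases eq_or_lt_of_le h12 with h | h
  · rw [h]
  · exact key (left_mem_Icc.2 h12) (right_mem_Icc.2 h12) h12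

theorem aa_zero_pos (m : ℕ) : 0 < aa m 0 := by
  rw [aa]
  norm_num
  positivity

theorem Jf_series (m : ℕ) (y : ℝ) : Jf m y = ∑' k, aa m k * y ^ (m + 2 * k) := by
  have hi : Function.Injective (fun k : ℕ => m + 2 * k) := fun a b hab => by
    simp only at hab; omega
  rw [Jf, S]
  rw [← hi.tsum_eq (f := fun n => cc m n * y ^ n) (fun n hn => by
    rw [Function.mem_support] at hn
    by_contra hmem
    apply hn
    show cc m n * y ^ n = 0
    rw [cc_not_range (fun k hk => hmem ⟨k, hk.symm⟩), zero_mul])]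
  exact tsum_congr fun k => by rw [cc_apply]

theorem summable_aa (m : ℕ) (y : ℝ) : Summable fun k => aa m k * y ^ (m + 2 * k) := by
  have hi : Function.Injective (fun k : ℕ => m + 2 * k) := fun a b hab => by
    simp only at hab; omega
  have h := ((gro_cc m).summable y)
  have h2 := (hi.summable_iff (f := fun n => cc m n * y ^ n) (fun n hn => by
    show cc m n * y ^ n = 0
    rw [cc_not_range (fun k hk => hn ⟨k, hk.symm⟩), zero_mul])).2 h
  exact h2.congr fun k => by simp only [Function.comp_apply, cc_apply]

theorem Jf_pos {m : ℕ} (hm : 2 ≤ m) {y : ℝ} (hy0 : 0 < y) (hy1 : y ≤ 1)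
    (hy2 : y ^ 2 < aa m 0) : 0 < Jf m y := by
  have hsk := summable_aa m y
  have hser := Jf_series m y
  rw [Summable.tsum_eq_zero_add hsk] at hser
  set T : ℝ := ∑' k, aa m (k + 1) * y ^ (m + 2 * (k + 1)) with hT
  have hsT : Summable fun k => aa m (k + 1) * y ^ (m + 2 * (k + 1)) := by
    have := (summable_nat_add_iff 1).2 hsk
    exact this.congr fun k => by ring_nf
  have hgeo : Summable fun k : ℕ => (1/4 : ℝ) ^ (k + 1) * y ^ (m + 2) := by
    apply Summable.mul_right
    exact ((summable_geometric_of_lt_one (by norm_num) (by norm_num)).comp_injective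
      (add_left_injective 1))
  have hb : ∀ k : ℕ, |aa m (k + 1) * y ^ (m + 2 * (k + 1))| ≤ (1/4 : ℝ) ^ (k + 1) * y ^ (m + 2) := by
    intro k
    rw [abs_mul, abs_pow, abs_of_pos hy0]
    have h1 : |aa m (k + 1)| ≤ (1/4 : ℝ) ^ (k + 1) := by
      refine (abs_aa_le m (k + 1)).trans ?_
      have : (1:ℝ) ≤ ((k+1).factorial : ℝ) := by
        exact_mod_cast Nat.one_le_iff_ne_zero.2 (Nat.factorial_ne_zero _)
      calc (1/4 : ℝ) ^ (k+1) / ((k+1).factorial : ℝ) ≤ (1/4 : ℝ) ^ (k+1) / 1 := by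
            apply div_le_div_of_nonneg_left (by positivity) (by norm_num) this
        _ = (1/4 : ℝ) ^ (k+1) := by ring
    have h2 : y ^ (m + 2 * (k + 1)) ≤ y ^ (m + 2) :=
      pow_le_pow_of_le_one hy0.le hy1 (by omega)
    exact mul_le_mul h1 h2 (by positivity) (by positivity)
  have hTb : |T| ≤ (1/3 : ℝ) * y ^ (m + 2) := by
    have hsabs : Summable fun k => |aa m (k + 1) * y ^ (m + 2 * (k + 1))| := hsT.abs
    have h1 : |T| ≤ ∑' k, |aa m (k + 1) * y ^ (m + 2 * (k + 1))| := by
      rw [hT, ← Real.norm_eq_abs]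
      refine (norm_tsum_le_tsum_norm ?_).trans_eq (tsum_congr fun k => Real.norm_eq_abs _)
      exact hsabs.congr fun k => (Real.norm_eq_abs _).symm
    have h2 : ∑' k, |aa m (k + 1) * y ^ (m + 2 * (k + 1))| ≤
        ∑' k : ℕ, (1/4 : ℝ) ^ (k + 1) * y ^ (m + 2) :=
      Summable.tsum_le_tsum hb hsabs hgeo
    have h3 : ∑' k : ℕ, (1/4 : ℝ) ^ (k + 1) * y ^ (m + 2) = (1/3 : ℝ) * y ^ (m + 2) := by
      rw [tsum_mul_right]
      have : ∑' k : ℕ, (1/4 : ℝ) ^ (k + 1) = 1/3 := by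
        have h4 : ∑' k : ℕ, (1/4 : ℝ) * (1/4 : ℝ) ^ k = (1/4 : ℝ) * ∑' k : ℕ, (1/4 : ℝ) ^ k :=
          tsum_mul_left
        rw [show (fun k : ℕ => (1/4 : ℝ) ^ (k + 1)) = fun k : ℕ => (1/4 : ℝ) * (1/4 : ℝ) ^ k by
          funext k; rw [pow_succ]; ring]
        rw [h4, tsum_geometric_of_lt_one (by norm_num) (by norm_num)]
        norm_num
      rw [this]
    linarith [h1.trans h2]
  rw [hser]
  have hym : 0 < y ^ m := pow_pos hy0 m
  have hsplit : y ^ (m + 2) = y ^ m * y ^ 2 := pow_add y m 2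
  have habs := abs_le.1 hTb
  have hkey : y ^ m * y ^ 2 < y ^ m * aa m 0 := by
    exact mul_lt_mul_of_pos_left hy2 hym
  simp only [mul_zero, pow_zero, Nat.mul_zero, Nat.add_zero] at *
  nlinarith [habs.1]


theorem core {m : ℕ} (hm : 2 ≤ m) {k τ : ℝ} (hk : 0 < k) (hτ0 : 0 < τ) (hτ1 : τ ≤ 1)
    (hturn : (m:ℝ) < k * τ) :
    (0 < ∫ r in (0:ℝ)..1, (Jf m (k * r)) ^ 2 * r) ∧
    ((k * τ) ^ 2 - (m:ℝ) ^ 2) / (k ^ 2 - (m:ℝ) ^ 2) ≤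
      (∫ r in (0:ℝ)..τ, (Jf m (k * r)) ^ 2 * r) / (∫ r in (0:ℝ)..1, (Jf m (k * r)) ^ 2 * r) := by
  have hm0 : (0:ℝ) < (m:ℝ) := by exact_mod_cast (by omega : 0 < m)
  have hkτk : k * τ ≤ k := by nlinarith
  have hmk : (m:ℝ) < k := lt_of_lt_of_le hturn hkτk
  have hkτ0 : 0 < k * τ := mul_pos hk hτ0
  set A := ∫ r in (0:ℝ)..τ, (Jf m (k * r)) ^ 2 * r with hAdef
  set B := ∫ r in (0:ℝ)..1, (Jf m (k * r)) ^ 2 * r with hBdef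
  have hA : A = Ef m (k * τ) / (2 * k ^ 2) := integral_eq hm hk τ
  have hB : B = Ef m k / (2 * k ^ 2) := by
    rw [hBdef, integral_eq hm hk 1, mul_one]
  have hcont : Continuous fun r => (Jf m (k * r)) ^ 2 * r :=
    (((continuous_Jf m).comp (continuous_const.mul continuous_id)).pow 2).mul continuous_id
  -- positivity of B
  have haa0 := aa_zero_pos m
  set ε := min 1 (Real.sqrt (aa m 0)) with hε
  have hε0 : 0 < ε := lt_min one_pos (Real.sqrt_pos.2 haa0)
  set δ := min 1 (ε / k) with hδ
  have hδ0 : 0 < δ := lt_min one_pos (div_pos hε0 hk)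
  have hδ1 : δ ≤ 1 := min_le_left _ _
  have hδε : δ ≤ ε / k := min_le_right _ _
  have hpos : ∀ r ∈ Ioo (δ/2) (3*δ/4), 0 < (Jf m (k * r)) ^ 2 * r := by
    intro r hr
    have hr0 : 0 < r := lt_trans (by linarith) hr.1
    have hrδ : r < δ := by
      rcases hr with ⟨h1, h2⟩; linarith
    have hkr : k * r < ε := by
      calc k * r < k * δ := mul_lt_mul_of_pos_left hrδ hk
        _ ≤ k * (ε / k) := mul_le_mul_of_nonneg_left hδε hk.le
        _ = ε := by field_simp
    have hkr0 : 0 < k * r := mul_pos hk hr0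
    have hJpos : 0 < Jf m (k * r) := by
      apply Jf_pos hm hkr0 (le_trans hkr.le (min_le_left _ _))
      have h1 : k * r < Real.sqrt (aa m 0) := lt_of_lt_of_le hkr (min_le_right _ _)
      have h2 := Real.sq_sqrt haa0.le
      nlinarith
    exact mul_pos (pow_pos hJpos 2) hr0
  have i1 : IntervalIntegrable (fun r => (Jf m (k * r)) ^ 2 * r) volume 0 (δ/2) :=
    hcont.intervalIntegrable _ _
  have i2 : IntervalIntegrable (fun r => (Jf m (k * r)) ^ 2 * r) volume (δ/2) (3*δ/4) :=
    hcont.intervalIntegrable _ _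
  have i12 : IntervalIntegrable (fun r => (Jf m (k * r)) ^ 2 * r) volume 0 (3*δ/4) :=
    hcont.intervalIntegrable _ _
  have i3 : IntervalIntegrable (fun r => (Jf m (k * r)) ^ 2 * r) volume (3*δ/4) 1 :=
    hcont.intervalIntegrable _ _
  have hI : 0 < ∫ r in (δ/2)..(3*δ/4), (Jf m (k * r)) ^ 2 * r :=
    intervalIntegral.intervalIntegral_pos_of_pos_on i2 hpos (by linarith)
  have e1 := intervalIntegral.integral_add_adjacent_intervals i1 i2
  have e2 := intervalIntegral.integral_add_adjacent_intervals i12 i3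
  have n1 : 0 ≤ ∫ r in (0:ℝ)..(δ/2), (Jf m (k * r)) ^ 2 * r :=
    intervalIntegral.integral_nonneg (by linarith)
      (fun x hx => mul_nonneg (sq_nonneg _) hx.1)
  have n3 : 0 ≤ ∫ r in (3*δ/4)..(1:ℝ), (Jf m (k * r)) ^ 2 * r :=
    intervalIntegral.integral_nonneg (by linarith)
      (fun x hx => mul_nonneg (sq_nonneg _) (le_trans (by linarith) hx.1))
  have hBpos : 0 < B := by
    rw [hBdef]
    rw [← e2, ← e1]
    linarith
  refine ⟨hBpos, ?_⟩
  -- the monotonicity inequality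
  have hd1 : 0 < (k * τ) ^ 2 - (m:ℝ) ^ 2 := by nlinarith
  have hd2 : 0 < k ^ 2 - (m:ℝ) ^ 2 := by nlinarith
  have hmono := Ef_antitone hm hturn hkτk
  have hmono' : Ef m k * ((k * τ) ^ 2 - (m:ℝ) ^ 2) ≤ Ef m (k * τ) * (k ^ 2 - (m:ℝ) ^ 2) := by
    rw [div_le_div_iff₀ hd2 hd1] at hmono
    linarith
  have hk2 : (0:ℝ) < 2 * k ^ 2 := by positivity
  have hEk : Ef m k = 2 * k ^ 2 * B := by rw [hB]; field_simp
  have hEkτ : Ef m (k * τ) = 2 * k ^ 2 * A := by rw [hA]; field_simp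
  rw [div_le_div_iff₀ hd2 hBpos]
  rw [hEk, hEkτ] at hmono'
  nlinarith

end Stmt18aux

/-- A Bessel mode whose wavenumber exceeds the turning point (`k_m/m → a > 1`) keeps a
positive fraction of its `L²` mass in the disk of radius `τ` for any `τ ∈ (1/a, 1)`. -/
theorem stmt18 (a : ℝ) (ha : 1 < a) (k : ℕ → ℝ) (hk : ∀ m, 0 < k m)
    (hlim : Filter.Tendsto (fun m : ℕ => k m / (m:ℝ)) Filter.atTop (nhds a))
    (τ : ℝ) (hτ1 : 1/a < τ) (hτ2 : τ < 1) :
    0 < Filter.liminf (fun m : ℕ =>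
        (∫ r in (0:ℝ)..τ, (besselJ m (k m * r)) ^ 2 * r) /
        (∫ r in (0:ℝ)..1, (besselJ m (k m * r)) ^ 2 * r)) Filter.atTop := by
  have ha0 : 0 < a := by linarith
  have hτ0 : 0 < τ := lt_trans (by positivity) hτ1
  have hτa : 1/τ < a := by
    rw [div_lt_iff₀ hτ0]
    rw [div_lt_iff₀ ha0] at hτ1
    nlinarith
  set b := (1/τ + a)/2 with hb
  have h1τ : 1 < 1/τ := by rw [lt_div_iff₀ hτ0]; linarith
  have hτb : 1/τ < b := by rw [hb]; linarith
  have hba : b < a := by rw [hb]; linarith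
  have hb1 : 1 < b := lt_trans h1τ hτb
  have hbτ : 1 < b * τ := by
    rw [div_lt_iff₀ hτ0] at hτb
    linarith
  set ρ := (b^2*τ^2 - 1)/((a+1)^2 - 1) with hρ
  have hbτpos : 0 < b^2*τ^2 - 1 := by nlinarith
  have hapos : 0 < (a+1)^2 - 1 := by nlinarith
  have hρpos : 0 < ρ := div_pos hbτpos hapos
  have hev1 : ∀ᶠ m : ℕ in atTop, k m / (m:ℝ) ∈ Ioo b (a+1) :=
    hlim (Ioo_mem_nhds hba (by linarith))
  have hev2 : ∀ᶠ m : ℕ in atTop, 2 ≤ m := eventually_ge_atTop 2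
  have hev : ∀ᶠ m : ℕ in atTop,
      ρ ≤ (∫ r in (0:ℝ)..τ, (besselJ m (k m * r)) ^ 2 * r) /
          (∫ r in (0:ℝ)..1, (besselJ m (k m * r)) ^ 2 * r) ∧
      (∫ r in (0:ℝ)..τ, (besselJ m (k m * r)) ^ 2 * r) /
          (∫ r in (0:ℝ)..1, (besselJ m (k m * r)) ^ 2 * r) ≤ 1 := by
    filter_upwards [hev1, hev2] with m hq hm
    have hm0 : (0:ℝ) < (m:ℝ) := by exact_mod_cast (by omega : 0 < m)
    have hkm : b * (m:ℝ) < k m := (lt_div_iff₀ hm0).1 hq.1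
    have hkm2 : k m < (a+1) * (m:ℝ) := (div_lt_iff₀ hm0).1 hq.2
    have hturn : (m:ℝ) < k m * τ := by
      have h1 : b * (m:ℝ) * τ < k m * τ := mul_lt_mul_of_pos_right hkm hτ0
      nlinarith [mul_pos hm0 (sub_pos.2 hbτ)]
    obtain ⟨hBpos, hineq⟩ := Stmt18aux.core hm (hk m) hτ0 hτ2.le hturn
    have hJr : ∀ x : ℝ, besselJ (m:ℝ) x = Stmt18aux.Jf m x := fun x => Stmt18aux.besselJ_eq_S m x
    simp only [hJr]
    have hkmm : (m:ℝ) < k m := by nlinarith [mul_pos hm0 (sub_pos.2 hb1)]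
    have hd2 : 0 < (k m)^2 - (m:ℝ)^2 := by
      nlinarith [mul_pos (sub_pos.2 hkmm) (by linarith : (0:ℝ) < k m + (m:ℝ))]
    constructor
    · have hstep : ρ ≤ ((k m * τ)^2 - (m:ℝ)^2)/((k m)^2 - (m:ℝ)^2) := by
        rw [hρ, div_le_div_iff₀ hapos hd2]
        have hq2sq : (k m)^2 < ((a+1)*(m:ℝ))^2 := by nlinarith
        have hb0 : (0:ℝ) < b := by linarith
        have hbsq : (b*(m:ℝ))^2 < (k m)^2 := by
          nlinarith [mul_self_lt_mul_self (by positivity : (0:ℝ) ≤ b*(m:ℝ)) hkm]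
        have key1 : (b^2*τ^2 - 1) * ((k m)^2 - (m:ℝ)^2) ≤
            (b^2*τ^2 - 1) * (((a+1)^2 - 1) * (m:ℝ)^2) :=
          mul_le_mul_of_nonneg_left (by nlinarith) hbτpos.le
        have key2 : ((a+1)^2 - 1) * ((b^2*τ^2 - 1) * (m:ℝ)^2) ≤
            ((a+1)^2-1) * ((k m * τ)^2 - (m:ℝ)^2) :=
          mul_le_mul_of_nonneg_left (by
            have hbmτ : b*(m:ℝ)*τ < k m * τ := mul_lt_mul_of_pos_right hkm hτ0
            nlinarith [mul_self_lt_mul_self (by positivity : (0:ℝ) ≤ b*(m:ℝ)*τ) hbmτ]) hapos.le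
        nlinarith [key1, key2]
      exact hstep.trans hineq
    · -- ratio ≤ 1
      have hcont : Continuous fun r => (Stmt18aux.Jf m (k m * r)) ^ 2 * r :=
        (((Stmt18aux.continuous_Jf m).comp (continuous_const.mul continuous_id)).pow 2).mul
          continuous_id
      have iA : IntervalIntegrable (fun r => (Stmt18aux.Jf m (k m * r)) ^ 2 * r) volume 0 τ :=
        hcont.intervalIntegrable _ _
      have iB : IntervalIntegrable (fun r => (Stmt18aux.Jf m (k m * r)) ^ 2 * r) volume τ 1 :=
        hcont.intervalIntegrable _ _
      have hAB := intervalIntegral.integral_add_adjacent_intervals iA iB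
      have hn : 0 ≤ ∫ r in τ..(1:ℝ), (Stmt18aux.Jf m (k m * r)) ^ 2 * r :=
        intervalIntegral.integral_nonneg hτ2.le
          (fun x hx => mul_nonneg (sq_nonneg _) (le_trans hτ0.le hx.1))
      rw [div_le_one hBpos]
      linarith
  exact lt_of_lt_of_le hρpos
    (Filter.le_liminf_of_le
      (Filter.isCoboundedUnder_ge_of_eventually_le _ (hev.mono fun m h => h.2))
      (hev.mono fun m h => h.1))
end
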